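/- Let X be a metrizable space and f : X → Y a closed continuous surjection onto a metrizable space Y. Then for every y ∈ Y the topological boundary Fr f⁻¹(y) of the fiber f⁻¹(y) in X is compact (Vainstein's lemma). -/

import Mathlib

open Filter Topology Set

/-- A sequence with no cluster point has closed range (in a T1 space). -/
lemma no_cluster_range_closed {X : Type*} [TopologicalSpace X] [T1Space X] (u : ℕ → X)
    (h : ∀ a : X, ¬ MapClusterPt a atTop u) : IsClosed (Set.range u) := by
  rw [← isOpen_compl_iff]
  rw [isOpen_iff_mem_nhds]
  intro a ha
  by_contra hcon
  apply h a
  rw [mapClusterPt_iff_frequently]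
  intro s hs
  by_contra hfreq
  rw [Filter.not_frequently] at hfreq
  -- the set of indices hitting s is finite
  have hfin : {n : ℕ | u n ∈ s}.Finite := by
    rcases (Filter.eventually_atTop).1 hfreq with ⟨N, hN⟩
    apply Set.Finite.subset (Set.finite_Iio N)
    intro n hn
    by_contra hnlt
    exact hN n (le_of_not_gt fun h => hnlt h) hn
  have hTfin : (u '' {n | u n ∈ s}).Finite := hfin.image u
  have haT : a ∉ u '' {n | u n ∈ s} := by
    rintro ⟨n, _, rfl⟩
    exact ha (Set.mem_range_self n)
  have hV : s ∩ (u '' {n | u n ∈ s})ᶜ ∈ 𝓝 a :=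
    Filter.inter_mem hs (hTfin.isClosed.isOpen_compl.mem_nhds haT)
  -- a is in closure of range u, so this nbhd meets range u
  have hclos : a ∈ closure (Set.range u) := by
    by_contra hcl
    exact hcon (Filter.mem_of_superset
      ((isOpen_compl_iff.2 isClosed_closure).mem_nhds hcl)
      (Set.compl_subset_compl.2 subset_closure))
  rcases mem_closure_iff_nhds.1 hclos _ hV with ⟨b, ⟨hbs, hbT⟩, m, rfl⟩
  exact hbT ⟨m, hbs, rfl⟩

/-- Vainstein's lemma: for a closed continuous surjection `f : X → Y` of metrizable
spaces, the boundary `Fr f⁻¹(y)` of every fiber is compact. -/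
theorem stmt11 {X Y : Type*} [TopologicalSpace X] [TopologicalSpace.MetrizableSpace X]
    [TopologicalSpace Y] [TopologicalSpace.MetrizableSpace Y]
    (f : X → Y) (hf : Continuous f) (hclosed : IsClosedMap f)
    (hsurj : Function.Surjective f) :
    ∀ y : Y, IsCompact (frontier (f ⁻¹' {y})) := by
  letI : MetricSpace X := TopologicalSpace.metrizableSpaceMetric X
  letI : MetricSpace Y := TopologicalSpace.metrizableSpaceMetric Y
  intro y
  set F : Set X := f ⁻¹' {y} with hF
  have hFc : IsClosed F := isClosed_singleton.preimage hf
  apply IsSeqCompact.isCompact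
  intro x hx
  -- main claim: x has a cluster point
  have key : ∃ a : X, MapClusterPt a atTop x := by
    by_contra hno
    push_neg at hno
    -- choose z n ∉ F close to x n with f (z n) close to y
    have hchoice : ∀ n : ℕ, ∃ z : X, z ∉ F ∧ dist z (x n) < 1 / (n + 1) ∧
        dist (f z) y < 1 / (n + 1) := by
      intro n
      have hxF : x n ∈ F := by
        have := (hx n).1
        rwa [hFc.closure_eq] at this
      have hxint : x n ∉ interior F := (hx n).2
      have hopen : IsOpen (Metric.ball (x n) (1 / (n + 1)) ∩ f ⁻¹' Metric.ball y (1 / (n + 1))) :=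
        Metric.isOpen_ball.inter (Metric.isOpen_ball.preimage hf)
      have hpos : (0 : ℝ) < 1 / (n + 1) := by positivity
      have hmem : x n ∈ Metric.ball (x n) (1 / (n + 1)) ∩ f ⁻¹' Metric.ball y (1 / (n + 1)) := by
        refine ⟨Metric.mem_ball_self hpos, ?_⟩
        simp only [Set.mem_preimage, hF] at hxF ⊢
        rw [hxF]
        exact Metric.mem_ball_self hpos
      by_cases hsub : Metric.ball (x n) (1 / (n + 1)) ∩ f ⁻¹' Metric.ball y (1 / (n + 1)) ⊆ F
      · exact absurd (mem_interior.2 ⟨_, hsub, hopen, hmem⟩) hxint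
      · rcases Set.not_subset.1 hsub with ⟨z, ⟨hz1, hz2⟩, hzF⟩
        exact ⟨z, hzF, Metric.mem_ball.1 hz1, Metric.mem_ball.1 hz2⟩
    choose z hzF hzx hzy using hchoice
    -- z has no cluster point either
    have hzno : ∀ a : X, ¬ MapClusterPt a atTop z := by
      intro a ha
      apply hno a
      rw [mapClusterPt_iff_frequently] at ha ⊢
      intro s hs
      rcases Metric.mem_nhds_iff.1 hs with ⟨ε, hε, hball⟩
      have h1 : ∀ᶠ n : ℕ in atTop, (1 : ℝ) / ((n : ℝ) + 1) < ε / 2 := by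
        exact tendsto_one_div_add_atTop_nhds_zero_nat.eventually (gt_mem_nhds (by linarith))
      have h2 : ∃ᶠ n in atTop, z n ∈ Metric.ball a (ε / 2) :=
        ha _ (Metric.ball_mem_nhds a (by linarith))
      refine ((h2.and_eventually h1).mono ?_)
      rintro n ⟨hzn, hn⟩
      apply hball
      rw [Metric.mem_ball] at hzn ⊢
      calc dist (x n) a ≤ dist (x n) (z n) + dist (z n) a := dist_triangle _ _ _
        _ < ε / 2 + ε / 2 := by
            rw [dist_comm]
            exact add_lt_add (lt_trans (hzx n) hn) hzn
        _ = ε := by ring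
    have hrange : IsClosed (Set.range z) := no_cluster_range_closed z hzno
    have himg : IsClosed (f '' Set.range z) := hclosed _ hrange
    -- f ∘ z tends to y
    have htend : Tendsto (fun n => f (z n)) atTop (𝓝 y) := by
      rw [Metric.tendsto_atTop]
      intro ε hε
      have h1 : ∀ᶠ n : ℕ in atTop, (1 : ℝ) / ((n : ℝ) + 1) < ε := by
        exact tendsto_one_div_add_atTop_nhds_zero_nat.eventually (gt_mem_nhds hε)
      rcases h1.exists_forall_of_atTop with ⟨N, hN⟩
      exact ⟨N, fun n hn => lt_trans (hzy n) (hN n hn)⟩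
    have hymem : y ∈ f '' Set.range z :=
      himg.mem_of_tendsto htend (Filter.Eventually.of_forall fun n =>
        ⟨z n, Set.mem_range_self n, rfl⟩)
    rcases hymem with ⟨w, ⟨m, rfl⟩, hw⟩
    exact hzF m (by simp [hF, hw])
  rcases key with ⟨a, ha⟩
  rcases TopologicalSpace.FirstCountableTopology.tendsto_subseq ha with ⟨φ, hφ, hlim⟩
  refine ⟨a, ?_, φ, hφ, hlim⟩
  exact isClosed_frontier.mem_of_tendsto hlim (Filter.Eventually.of_forall fun n => hx (φ n))
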